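/- There do not exist polynomials A, B ∈ ℝ[x,y,z] such that A and B have no common zero in ℝ³ and A(p)·(1 − x(p)) = B(p)·y(p) for every point p = (x,y,z) ∈ ℝ³ with x² + y² = 1 and z = 0. Equivalently, the regular map f from the unit circle C = {x²+y²=1, z=0} ⊂ 𝔸³_ℝ to ℙ¹ given by p ↦ (y : 1−x) = (1+x : y) does not extend to a regular map 𝔸³_ℝ → ℙ¹ given by a pair of polynomials without common real zeros. -/

import Mathlib

open Real MvPolynomial Set

/-- There are no polynomials `A, B ∈ ℝ[x,y,z]` without a common zero
in `ℝ³` such that `A·(1−x) = B·y` holds at every point of the unit circle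
`x² + y² = 1, z = 0`.  Equivalently, the regular map `p ↦ (y : 1−x) = (1+x : y)` from
the circle to `ℙ¹` does not extend to a regular map `𝔸³_ℝ → ℙ¹` given by a pair of
polynomials without common real zeros. -/
theorem stmt_15 :
    ¬ ∃ A B : MvPolynomial (Fin 3) ℝ,
      (∀ p : Fin 3 → ℝ, ¬ (MvPolynomial.eval p A = 0 ∧ MvPolynomial.eval p B = 0)) ∧
      (∀ p : Fin 3 → ℝ, (p 0) ^ 2 + (p 1) ^ 2 = 1 → p 2 = 0 →
        MvPolynomial.eval p A * (1 - p 0) = MvPolynomial.eval p B * p 1) := by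
  rintro ⟨A, B, hnz, heq⟩
  set P : ℝ → (Fin 3 → ℝ) := fun t => ![Real.cos t, Real.sin t, 0] with hP
  set a : ℝ → ℝ := fun t => MvPolynomial.eval (P t) A with ha
  set b : ℝ → ℝ := fun t => MvPolynomial.eval (P t) B with hb
  set E : ℝ → ℝ := fun t => a t * Real.cos (t / 2) + b t * Real.sin (t / 2) with hE
  have hPcont : Continuous P := by
    apply continuous_pi
    intro i
    fin_cases i <;> simp [hP] <;> continuity
  have hacont : Continuous a := (MvPolynomial.continuous_eval _).comp hPcont
  have hbcont : Continuous b := (MvPolynomial.continuous_eval _).comp hPcont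
  have hEcont : Continuous E := by
    apply Continuous.add
    · exact hacont.mul (Real.continuous_cos.comp (continuous_id.div_const 2))
    · exact hbcont.mul (Real.continuous_sin.comp (continuous_id.div_const 2))
  -- the main relation on the circle
  have hyp : ∀ t : ℝ, a t * (1 - Real.cos t) = b t * Real.sin t := by
    intro t
    have := heq (P t) (by simp [hP, Real.cos_sq_add_sin_sq]) (by simp [hP])
    simpa [hP, ha, hb] using this
  -- half-angle consequences
  have key : ∀ t : ℝ, Real.sin (t / 2) ≠ 0 →
      a t * Real.sin (t / 2) = b t * Real.cos (t / 2) := by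
    intro t hs
    have h1 : Real.sin t = 2 * Real.sin (t / 2) * Real.cos (t / 2) := by
      rw [← Real.sin_two_mul]; ring_nf
    have h2 : 1 - Real.cos t = 2 * Real.sin (t / 2) ^ 2 := by
      have h := Real.sin_sq_eq_half_sub (t / 2)
      have h2t : 2 * (t / 2) = t := by ring
      rw [h2t] at h
      linarith
    have h := hyp t
    rw [h1, h2] at h
    have : Real.sin (t / 2) * (a t * Real.sin (t / 2) - b t * Real.cos (t / 2)) = 0 := by
      ring_nf; ring_nf at h; linarith
    rcases mul_eq_zero.1 this with h' | h'
    · exact absurd h' hs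
    · linarith
  have pyth : ∀ t : ℝ, Real.sin (t / 2) ^ 2 + Real.cos (t / 2) ^ 2 = 1 := fun t =>
    Real.sin_sq_add_cos_sq _
  have bE : ∀ t : ℝ, Real.sin (t / 2) ≠ 0 → b t = E t * Real.sin (t / 2) := by
    intro t hs
    have hk := key t hs
    have hp := pyth t
    simp only [hE]
    linear_combination (-Real.cos (t / 2)) * hk + (-(b t)) * hp
  -- b vanishes at t = 0 by continuity
  have b0 : b 0 = 0 := by
    have heqon : Set.EqOn b (fun t => E t * Real.sin (t / 2)) (Set.Ioo (0:ℝ) π) := by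
      intro t ht
      have hs : Real.sin (t / 2) ≠ 0 := by
        have : 0 < Real.sin (t / 2) := Real.sin_pos_of_pos_of_lt_pi (by linarith [ht.1])
          (by linarith [ht.2, Real.pi_pos])
        exact ne_of_gt this
      exact bE t hs
    have hcl : Set.EqOn b (fun t => E t * Real.sin (t / 2)) (closure (Set.Ioo (0:ℝ) π)) :=
      heqon.closure hbcont (hEcont.mul (Real.continuous_sin.comp (continuous_id.div_const 2)))
    have h0 : (0:ℝ) ∈ closure (Set.Ioo (0:ℝ) π) := by
      rw [closure_Ioo (ne_of_lt Real.pi_pos)]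
      exact ⟨le_refl 0, le_of_lt Real.pi_pos⟩
    have := hcl h0
    simpa using this
  -- a vanishes at t = π, so b π ≠ 0
  have apia : a π = 0 := by
    have h := hyp π
    simp [Real.cos_pi, Real.sin_pi] at h
    linarith
  have bpi : b π ≠ 0 := by
    intro hbp
    exact hnz (P π) ⟨apia, hbp⟩
  -- periodicity : P (3π) = P π and P (2π) = P 0
  have e3 : (3:ℝ) * π = π + 2 * π := by ring
  have e2 : (2:ℝ) * π = 0 + 2 * π := by ring
  have hc3 : Real.cos (3 * π) = Real.cos π := by rw [e3, Real.cos_add_two_pi]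
  have hs3 : Real.sin (3 * π) = Real.sin π := by rw [e3, Real.sin_add_two_pi]
  have hc2 : Real.cos (2 * π) = Real.cos 0 := by rw [e2, Real.cos_add_two_pi]
  have hs2 : Real.sin (2 * π) = Real.sin 0 := by rw [e2, Real.sin_add_two_pi]
  have hP3 : P (3 * π) = P π := by
    funext i
    fin_cases i <;> simp only [hP, Matrix.cons_val_zero, Matrix.cons_val_one, Matrix.head_cons,
      Matrix.cons_val_two, Matrix.tail_cons, hc3, hs3]
  have hP2 : P (2 * π) = P 0 := by
    funext i
    fin_cases i <;> simp only [hP, Matrix.cons_val_zero, Matrix.cons_val_one, Matrix.head_cons,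
      Matrix.cons_val_two, Matrix.tail_cons, hc2, hs2]
  -- values of E at π and 3π
  have Epi : E π = b π := by
    simp [hE, Real.cos_pi_div_two, Real.sin_pi_div_two]
  have E3pi : E (3 * π) = - b π := by
    have h32 : (3:ℝ) * π / 2 = π / 2 + π := by ring
    have hc : Real.cos (3 * π / 2) = 0 := by
      rw [h32, Real.cos_add_pi, Real.cos_pi_div_two, neg_zero]
    have hs : Real.sin (3 * π / 2) = -1 := by
      rw [h32, Real.sin_add_pi, Real.sin_pi_div_two]
    have hb3 : b (3 * π) = b π := by simp only [hb, hP3]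
    simp [hE, hc, hs, hb3]
  -- intermediate value theorem
  have hpi_le : π ≤ 3 * π := by nlinarith [Real.pi_pos]
  have hEzero : ∃ t₀ ∈ Set.Icc π (3 * π), E t₀ = 0 := by
    have h0mem : (0:ℝ) ∈ Set.uIcc (E π) (E (3 * π)) := by
      rw [Epi, E3pi]
      rcases lt_or_ge (b π) 0 with h | h
      · exact Set.mem_uIcc.2 (Or.inl ⟨le_of_lt h, by linarith⟩)
      · exact Set.mem_uIcc.2 (Or.inr ⟨by linarith, h⟩)
    have := intermediate_value_uIcc (hEcont.continuousOn (s := Set.uIcc π (3 * π))) h0mem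
    obtain ⟨t₀, ht₀, hEt₀⟩ := this
    refine ⟨t₀, ?_, hEt₀⟩
    rwa [Set.uIcc_of_le hpi_le] at ht₀
  obtain ⟨t₀, ht₀, hEt₀⟩ := hEzero
  by_cases hs : Real.sin (t₀ / 2) = 0
  · -- then t₀ = 2π, and a 0 = 0 = b 0, contradiction
    obtain ⟨n, hn⟩ := Real.sin_eq_zero_iff.1 hs
    have hpi : (0:ℝ) < π := Real.pi_pos
    have hn1 : n = 1 := by
      have h1 : (1/2 : ℝ) * π ≤ (n : ℝ) * π := by rw [hn]; linarith [ht₀.1]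
      have h2 : (n : ℝ) * π ≤ (3/2 : ℝ) * π := by rw [hn]; linarith [ht₀.2]
      have h1' : (1/2 : ℝ) ≤ (n : ℝ) := (mul_le_mul_iff_of_pos_right hpi).mp h1
      have h2' : (n : ℝ) ≤ (3/2 : ℝ) := (mul_le_mul_iff_of_pos_right hpi).mp h2
      have hlt : (0 : ℤ) < n := by exact_mod_cast lt_of_lt_of_le (by norm_num : (0:ℝ) < 1/2) h1'
      have hlt2 : n < 2 := by exact_mod_cast lt_of_le_of_lt h2' (by norm_num : (3/2 : ℝ) < 2)
      omega
    have ht2 : t₀ = 2 * π := by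
      have : (n : ℝ) * π = t₀ / 2 := hn
      rw [hn1] at this
      push_cast at this
      linarith
    have hc : Real.cos (t₀ / 2) = -1 := by
      rw [ht2]
      norm_num [Real.cos_pi]
    have ha2 : a t₀ = a 0 := by
      rw [ht2]; simp only [ha, hP2]
    have : a 0 = 0 := by
      have := hEt₀
      rw [hE] at this
      simp only at this
      rw [hs, hc, ha2] at this
      linarith
    exact hnz (P 0) ⟨this, b0⟩
  · -- sin (t₀/2) ≠ 0 : then a t₀ = b t₀ = 0
    have hk := key t₀ hs
    have hE0 : a t₀ * Real.cos (t₀ / 2) + b t₀ * Real.sin (t₀ / 2) = 0 := hEt₀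
    have hp := pyth t₀
    have hb0 : b t₀ = 0 := by
      linear_combination (-Real.cos (t₀ / 2)) * hk + (Real.sin (t₀ / 2)) * hE0 - (b t₀) * hp
    have ha0 : a t₀ = 0 := by
      have := hk
      rw [hb0] at this
      simp at this
      rcases this with h | h
      · exact h
      · exact absurd h hs
    exact hnz (P t₀) ⟨ha0, hb0⟩
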